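/- Let F: U → ℝ be a C¹ convex function on a convex open set U ⊆ ℝⁿ, and suppose F is C² and strictly convex (positive definite Hessian) on an open subset V ⊆ U. If u* ∈ V is a critical point of F (∇F(u*) = 0), then u* is the unique critical point of F in U. -/

import Mathlib

open Set

/-- Rigidity via convexity: a `C¹` convex function on a convex open set `U`, which is
`C²` with positive definite Hessian on an open subset `V ∋ u*`, has `u*` as its unique
critical point in `U` as soon as `∇F(u*) = 0`. -/
theorem unique_critical_point_of_convex (n : ℕ)
    (F : EuclideanSpace ℝ (Fin n) → ℝ)
    (U V : Set (EuclideanSpace ℝ (Fin n)))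
    (hUopen : IsOpen U) (hUconv : Convex ℝ U) (hVopen : IsOpen V) (hVU : V ⊆ U)
    (hC1 : ContDiffOn ℝ 1 F U) (hconv : ConvexOn ℝ U F)
    (hC2 : ContDiffOn ℝ 2 F V)
    (hHess : ∀ x ∈ V, ∀ ξ : EuclideanSpace ℝ (Fin n), ξ ≠ 0 →
      0 < iteratedFDeriv ℝ 2 F x ![ξ, ξ])
    (ustar : EuclideanSpace ℝ (Fin n)) (hustar : ustar ∈ V)
    (hcrit : gradient F ustar = 0) :
    ∀ u ∈ U, gradient F u = 0 → u = ustar := by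
  intro u hu hgrad
  by_contra hne
  have hustarU : ustar ∈ U := hVU hustar
  set ξ : EuclideanSpace ℝ (Fin n) := u - ustar with hξdef
  have hξ : ξ ≠ 0 := sub_ne_zero.mpr hne
  -- fderivs vanish at the two critical points
  have hcrit' : fderiv ℝ F ustar = 0 := by
    unfold gradient at hcrit; simpa using hcrit
  have hgrad' : fderiv ℝ F u = 0 := by
    unfold gradient at hgrad; simpa using hgrad
  -- the line
  set L : ℝ → EuclideanSpace ℝ (Fin n) := fun t => t • ξ + ustar with hLdef
  have hL0 : L 0 = ustar := by simp [hLdef]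
  have hL1 : L 1 = u := by simp [hLdef, hξdef]
  have hseg : ∀ t ∈ Icc (0:ℝ) 1, L t ∈ U := by
    intro t ht
    have := hUconv.add_smul_sub_mem hustarU hu ht
    simpa [hLdef, hξdef, add_comm] using this
  -- differentiability of F on U
  have hdiffU : ∀ x ∈ U, DifferentiableAt ℝ F x := fun x hx =>
    (hC1.contDiffAt (hUopen.mem_nhds hx)).differentiableAt one_ne_zero
  -- derivative of the line
  have hL : ∀ t : ℝ, HasDerivAt L ξ t := by
    intro t
    simpa [hLdef] using ((hasDerivAt_id t).smul_const ξ).add_const ustar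
  -- directional derivative along the line
  set g : ℝ → ℝ := fun t => fderiv ℝ F (L t) ξ with hgdef
  have hφ : ∀ t ∈ Icc (0:ℝ) 1, HasDerivAt (F ∘ L) (g t) t := fun t ht =>
    ((hdiffU _ (hseg t ht)).hasFDerivAt).comp_hasDerivAt t (hL t)
  have hg0 : g 0 = 0 := by simp [hgdef, hL0, hcrit']
  have hg1 : g 1 = 0 := by simp [hgdef, hL1, hgrad']
  -- convexity of φ = F ∘ L on [0,1]
  have hφconv : ConvexOn ℝ (Icc (0:ℝ) 1) (F ∘ L) := by
    have hA : ConvexOn ℝ ((AffineMap.lineMap ustar u : ℝ →ᵃ[ℝ] EuclideanSpace ℝ (Fin n)) ⁻¹' U)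
        (F ∘ (AffineMap.lineMap ustar u : ℝ →ᵃ[ℝ] EuclideanSpace ℝ (Fin n))) :=
      hconv.comp_affineMap _
    have hLA : (F ∘ (AffineMap.lineMap ustar u : ℝ →ᵃ[ℝ] EuclideanSpace ℝ (Fin n))) = F ∘ L := by
      funext t
      simp [Function.comp, AffineMap.lineMap_apply, hLdef, hξdef]
    rw [hLA] at hA
    refine hA.subset ?_ (convex_Icc 0 1)
    intro t ht
    have := hseg t ht
    simpa [Set.mem_preimage, AffineMap.lineMap_apply, hLdef, hξdef] using this
  have h0mem : (0:ℝ) ∈ Icc (0:ℝ) 1 := ⟨le_refl 0, zero_le_one⟩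
  have h1mem : (1:ℝ) ∈ Icc (0:ℝ) 1 := ⟨zero_le_one, le_refl 1⟩
  -- φ 1 = φ 0
  have hφ10 : F (L 1) = F (L 0) := by
    have hlow : (0:ℝ) ≤ slope (F ∘ L) 0 1 := by
      have := hφconv.le_slope_of_hasDerivAt h0mem h1mem zero_lt_one (hφ 0 h0mem)
      rwa [hg0] at this
    have hup : slope (F ∘ L) 0 1 ≤ 0 := by
      have := hφconv.slope_le_of_hasDerivAt h0mem h1mem zero_lt_one (hφ 1 h1mem)
      rwa [hg1] at this
    have heq : slope (F ∘ L) 0 1 = 0 := le_antisymm hup hlow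
    rw [slope_def_field] at heq
    norm_num [Function.comp] at heq
    linarith
  -- φ is constant on [0,1]
  have hconst : ∀ t ∈ Icc (0:ℝ) 1, F (L t) = F (L 0) := by
    intro t ht
    rcases eq_or_lt_of_le ht.1 with h0t | h0t
    · rw [← h0t]
    · -- lower bound : φ 0 ≤ φ t
      have htmem : t ∈ Icc (0:ℝ) 1 := ht
      have hlow : F (L 0) ≤ F (L t) := by
        have hs := hφconv.le_slope_of_hasDerivAt h0mem htmem h0t (hφ 0 h0mem)
        rw [hg0, slope_def_field] at hs
        simp only [sub_zero] at hs
        have hmul := mul_nonneg hs h0t.le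
        rw [div_mul_cancel₀ _ (ne_of_gt h0t)] at hmul
        simpa [Function.comp] using sub_nonneg.mp hmul
      -- upper bound : φ t ≤ φ 0 via convexity and φ 1 = φ 0
      have hup : F (L t) ≤ F (L 0) := by
        have h := hφconv.2 h0mem h1mem (show (0:ℝ) ≤ 1 - t by linarith [ht.2])
          h0t.le (by ring)
        have he : (1 - t) • (0:ℝ) + t • (1:ℝ) = t := by simp
        rw [he] at h
        calc F (L t) ≤ (1 - t) * F (L 0) + t * F (L 1) := by
              simpa [Function.comp, smul_eq_mul] using h
          _ = F (L 0) := by rw [hφ10]; ring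
      exact le_antisymm hup hlow
  -- hence g vanishes on [0,1]
  have hgzero : ∀ t ∈ Icc (0:ℝ) 1, g t = 0 := by
    intro t ht
    have hA : HasDerivWithinAt (F ∘ L) (g t) (Icc (0:ℝ) 1) t :=
      (hφ t ht).hasDerivWithinAt
    have hB : HasDerivWithinAt (F ∘ L) 0 (Icc (0:ℝ) 1) t := by
      have hc : HasDerivWithinAt (fun _ : ℝ => F (L 0)) 0 (Icc (0:ℝ) 1) t :=
        (hasDerivWithinAt_const _ _ _)
      exact hc.congr (fun y hy => hconst y hy) (hconst t ht)
    have hud := uniqueDiffOn_Icc_zero_one t ht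
    rw [← hA.derivWithin hud, hB.derivWithin hud]
  -- second derivative along ξ at ustar
  have hC2at : ContDiffAt ℝ 2 F ustar := hC2.contDiffAt (hVopen.mem_nhds hustar)
  have hd2 : DifferentiableAt ℝ (fderiv ℝ F) ustar :=
    (hC2at.fderiv_right (m := 1) (by norm_num)).differentiableAt one_ne_zero
  have hf' : HasFDerivAt (fderiv ℝ F) (fderiv ℝ (fderiv ℝ F) ustar) ustar :=
    hd2.hasFDerivAt
  -- h x = fderiv F x ξ
  have hh : HasFDerivAt (fun x : EuclideanSpace ℝ (Fin n) => fderiv ℝ F x ξ)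
      (((fderiv ℝ F ustar).comp 0) + (fderiv ℝ (fderiv ℝ F) ustar).flip ξ) ustar :=
    hf'.clm_apply (hasFDerivAt_const ξ ustar)
  have hgd : HasDerivAt g (fderiv ℝ (fderiv ℝ F) ustar ξ ξ) 0 := by
    rw [← hL0] at hh
    have := hh.comp_hasDerivAt 0 (hL 0)
    simp [hgdef, Function.comp, hL0] at this
    exact this
  -- g vanishes on [0,1], so its deriv within at 0 is 0
  have hzero : fderiv ℝ (fderiv ℝ F) ustar ξ ξ = 0 := by
    have hA : HasDerivWithinAt g (fderiv ℝ (fderiv ℝ F) ustar ξ ξ) (Icc (0:ℝ) 1) 0 :=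
      hgd.hasDerivWithinAt
    have hB : HasDerivWithinAt g 0 (Icc (0:ℝ) 1) 0 := by
      have hc : HasDerivWithinAt (fun _ : ℝ => (0:ℝ)) 0 (Icc (0:ℝ) 1) 0 :=
        (hasDerivWithinAt_const _ _ _)
      exact hc.congr (fun y hy => hgzero y hy) (hgzero 0 h0mem)
    have hud := uniqueDiffOn_Icc_zero_one 0 h0mem
    rw [← hA.derivWithin hud, hB.derivWithin hud]
  have hpos := hHess ustar hustar ξ hξ
  rw [iteratedFDeriv_two_apply] at hpos
  simp only [Matrix.cons_val_zero, Matrix.cons_val_one, Matrix.head_cons] at hpos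
  rw [hzero] at hpos
  exact lt_irrefl 0 hpos
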